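/- Tripartite spectral-norm bound setup: let H be a (finite-dimensional) complex inner product space, ψ ∈ H a unit vector, and for each x ∈ X, y ∈ Y, z ∈ Z let A_x, B_y, C_z be operators on factors of H = H_A ⊗ H_B ⊗ H_C with operator norm ≤ 1. Let Φ be a complex matrix indexed by X × (Y × Z) with entries Φ_{x,(y,z)}. Then |∑_{x,y,z} Φ_{x,(y,z)} ⟨ψ, (A_x ⊗ B_y ⊗ C_z) ψ⟩| ≤ √(|X||Y||Z|) · ‖Φ‖. -/

import Mathlib

open Kronecker

/-- The spectral (operator) norm of a matrix. -/
noncomputable def specNorm {𝕜 : Type*} [RCLike 𝕜] {m n : Type*} [Fintype m] [Fintype n]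
    [DecidableEq n] (Φ : Matrix m n 𝕜) : ℝ :=
  ‖LinearMap.toContinuousLinearMap (Matrix.toEuclideanLin Φ)‖

namespace Aux16

open Matrix

lemma specNorm_nonneg {m n : Type*} [Fintype m] [Fintype n] [DecidableEq n]
    (M : Matrix m n ℂ) : 0 ≤ specNorm M := norm_nonneg _

lemma le_of_sq {a b : ℝ} (hb : 0 ≤ b) (h : a ^ 2 ≤ b ^ 2) (ha : 0 ≤ a) : a ≤ b := by
  nlinarith

lemma sq_norm {I : Type*} [Fintype I] (x : EuclideanSpace ℂ I) :
    ‖x‖ ^ 2 = ∑ i, ‖x i‖ ^ 2 := by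
  rw [EuclideanSpace.norm_eq, Real.sq_sqrt (by positivity)]

lemma apply_le {m n : Type*} [Fintype m] [Fintype n] [DecidableEq n]
    (M : Matrix m n ℂ) (v : EuclideanSpace ℂ n) :
    ‖Matrix.toEuclideanLin M v‖ ≤ specNorm M * ‖v‖ := by
  have := (LinearMap.toContinuousLinearMap (Matrix.toEuclideanLin M)).le_opNorm v
  simpa [specNorm] using this

lemma specNorm_conjT {m n : Type*} [Fintype m] [Fintype n] [DecidableEq n] [DecidableEq m]
    (M : Matrix m n ℂ) : specNorm Mᴴ = specNorm M := by
  rw [specNorm, Matrix.toEuclideanLin_conjTranspose_eq_adjoint,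
    LinearMap.adjoint_toContinuousLinearMap]
  exact LinearIsometryEquiv.norm_map ContinuousLinearMap.adjoint _

lemma toEuclideanLin_one' {n : Type*} [Fintype n] [DecidableEq n] :
    Matrix.toEuclideanLin (1 : Matrix n n ℂ) = LinearMap.id := by
  ext v i
  simp [Matrix.toEuclideanLin_apply, Matrix.one_mulVec]

lemma specNorm_one_le {n : Type*} [Fintype n] [DecidableEq n] :
    specNorm (1 : Matrix n n ℂ) ≤ 1 := by
  rw [specNorm, toEuclideanLin_one']
  exact ContinuousLinearMap.norm_id_le (E := EuclideanSpace ℂ n)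

lemma conjT_kron {m n m' n' : Type*} (M : Matrix m n ℂ) (N : Matrix m' n' ℂ) :
    (M ⊗ₖ N)ᴴ = Mᴴ ⊗ₖ Nᴴ := by
  ext ⟨a, b⟩ ⟨c, d⟩
  simp [Matrix.conjTranspose_apply, Matrix.kroneckerMap_apply]

def sliceL {m n : Type*} (w : EuclideanSpace ℂ (m × n)) (k : n) : EuclideanSpace ℂ m :=
  WithLp.toLp 2 (fun j => w (j, k))

def sliceR {m n : Type*} (w : EuclideanSpace ℂ (m × n)) (j : m) : EuclideanSpace ℂ n :=
  WithLp.toLp 2 (fun k => w (j, k))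

lemma kron_one_le {m n : Type*} [Fintype m] [Fintype n] [DecidableEq m] [DecidableEq n]
    (M : Matrix m m ℂ) (w : EuclideanSpace ℂ (m × n)) :
    ‖Matrix.toEuclideanLin (M ⊗ₖ (1 : Matrix n n ℂ)) w‖ ≤ specNorm M * ‖w‖ := by
  have hpt : ∀ i k, (Matrix.toEuclideanLin (M ⊗ₖ (1 : Matrix n n ℂ)) w) (i, k)
      = (Matrix.toEuclideanLin M (sliceL w k)) i := by
    intro i k
    show ((M ⊗ₖ (1 : Matrix n n ℂ)) *ᵥ (fun p => w p)) (i, k) = (M *ᵥ (fun j => w (j, k))) i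
    simp [Matrix.mulVec, dotProduct, Fintype.sum_prod_type,
      Matrix.kroneckerMap_apply, Matrix.one_apply, mul_ite, ite_mul]
  refine le_of_sq (mul_nonneg (specNorm_nonneg M) (norm_nonneg _)) ?_ (norm_nonneg _)
  rw [sq_norm, mul_pow, sq_norm]
  have hsl : ∀ k, ‖sliceL w k‖ ^ 2 = ∑ j, ‖w (j, k)‖ ^ 2 := fun k => by
    rw [sq_norm]; rfl
  calc ∑ p : m × n, ‖(Matrix.toEuclideanLin (M ⊗ₖ (1 : Matrix n n ℂ)) w) p‖ ^ 2
      = ∑ k : n, ∑ i : m, ‖(Matrix.toEuclideanLin M (sliceL w k)) i‖ ^ 2 := by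
        rw [Fintype.sum_prod_type, Finset.sum_comm]
        exact Finset.sum_congr rfl fun k _ => Finset.sum_congr rfl fun i _ => by rw [hpt]
    _ = ∑ k : n, ‖Matrix.toEuclideanLin M (sliceL w k)‖ ^ 2 :=
        Finset.sum_congr rfl fun k _ => (sq_norm _).symm
    _ ≤ ∑ k : n, (specNorm M * ‖sliceL w k‖) ^ 2 := by
        refine Finset.sum_le_sum fun k _ => ?_
        have := apply_le M (sliceL w k)
        nlinarith [norm_nonneg (Matrix.toEuclideanLin M (sliceL w k))]
    _ = specNorm M ^ 2 * ∑ p : m × n, ‖w p‖ ^ 2 := by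
        simp_rw [mul_pow, ← Finset.mul_sum]
        congr 1
        rw [Fintype.sum_prod_type, Finset.sum_comm]
        exact Finset.sum_congr rfl fun k _ => hsl k

lemma one_kron_le {m n : Type*} [Fintype m] [Fintype n] [DecidableEq m] [DecidableEq n]
    (N : Matrix n n ℂ) (w : EuclideanSpace ℂ (m × n)) :
    ‖Matrix.toEuclideanLin ((1 : Matrix m m ℂ) ⊗ₖ N) w‖ ≤ specNorm N * ‖w‖ := by
  have hpt : ∀ i k, (Matrix.toEuclideanLin ((1 : Matrix m m ℂ) ⊗ₖ N) w) (i, k)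
      = (Matrix.toEuclideanLin N (sliceR w i)) k := by
    intro i k
    show (((1 : Matrix m m ℂ) ⊗ₖ N) *ᵥ (fun p => w p)) (i, k) = (N *ᵥ (fun l => w (i, l))) k
    simp [Matrix.mulVec, dotProduct, Fintype.sum_prod_type,
      Matrix.kroneckerMap_apply, Matrix.one_apply, mul_ite, ite_mul]
  refine le_of_sq (mul_nonneg (specNorm_nonneg N) (norm_nonneg _)) ?_ (norm_nonneg _)
  rw [sq_norm, mul_pow, sq_norm]
  have hsl : ∀ i, ‖sliceR w i‖ ^ 2 = ∑ k, ‖w (i, k)‖ ^ 2 := fun i => by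
    rw [sq_norm]; rfl
  calc ∑ p : m × n, ‖(Matrix.toEuclideanLin ((1 : Matrix m m ℂ) ⊗ₖ N) w) p‖ ^ 2
      = ∑ i : m, ∑ k : n, ‖(Matrix.toEuclideanLin N (sliceR w i)) k‖ ^ 2 := by
        rw [Fintype.sum_prod_type]
        exact Finset.sum_congr rfl fun i _ => Finset.sum_congr rfl fun k _ => by rw [hpt]
    _ = ∑ i : m, ‖Matrix.toEuclideanLin N (sliceR w i)‖ ^ 2 :=
        Finset.sum_congr rfl fun i _ => (sq_norm _).symm
    _ ≤ ∑ i : m, (specNorm N * ‖sliceR w i‖) ^ 2 := by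
        refine Finset.sum_le_sum fun i _ => ?_
        have := apply_le N (sliceR w i)
        nlinarith [norm_nonneg (Matrix.toEuclideanLin N (sliceR w i))]
    _ = specNorm N ^ 2 * ∑ p : m × n, ‖w p‖ ^ 2 := by
        simp_rw [mul_pow, ← Finset.mul_sum]
        congr 1
        rw [Fintype.sum_prod_type]
        exact Finset.sum_congr rfl fun i _ => hsl i

lemma toEuclideanLin_mul_apply {l m n : Type*} [Fintype l] [Fintype m] [Fintype n]
    [DecidableEq m] [DecidableEq n]
    (P : Matrix l m ℂ) (Q : Matrix m n ℂ) (v : EuclideanSpace ℂ n) :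
    Matrix.toEuclideanLin (P * Q) v = Matrix.toEuclideanLin P (Matrix.toEuclideanLin Q v) := by
  simp [Matrix.toEuclideanLin_apply, Matrix.mulVec_mulVec]

lemma kron_le {m n : Type*} [Fintype m] [Fintype n] [DecidableEq m] [DecidableEq n]
    (M : Matrix m m ℂ) (N : Matrix n n ℂ) (v : EuclideanSpace ℂ (m × n)) :
    ‖Matrix.toEuclideanLin (M ⊗ₖ N) v‖ ≤ specNorm M * (specNorm N * ‖v‖) := by
  have hfac : M ⊗ₖ N = (M ⊗ₖ (1 : Matrix n n ℂ)) * ((1 : Matrix m m ℂ) ⊗ₖ N) := by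
    rw [← Matrix.mul_kronecker_mul, mul_one, one_mul]
  rw [hfac, toEuclideanLin_mul_apply]
  calc ‖Matrix.toEuclideanLin (M ⊗ₖ (1 : Matrix n n ℂ))
        (Matrix.toEuclideanLin ((1 : Matrix m m ℂ) ⊗ₖ N) v)‖
      ≤ specNorm M * ‖Matrix.toEuclideanLin ((1 : Matrix m m ℂ) ⊗ₖ N) v‖ := kron_one_le _ _
    _ ≤ specNorm M * (specNorm N * ‖v‖) :=
        mul_le_mul_of_nonneg_left (one_kron_le _ _) (specNorm_nonneg M)

lemma specNorm_kron_le {m n : Type*} [Fintype m] [Fintype n] [DecidableEq m] [DecidableEq n]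
    (M : Matrix m m ℂ) (N : Matrix n n ℂ) :
    specNorm (M ⊗ₖ N) ≤ specNorm M * specNorm N := by
  rw [specNorm]
  refine ContinuousLinearMap.opNorm_le_bound _
    (mul_nonneg (specNorm_nonneg M) (specNorm_nonneg N)) fun v => ?_
  simpa [mul_assoc] using kron_le M N v

lemma key {X J I : Type*} [Fintype X] [Fintype J] [Fintype I] [DecidableEq J]
    (Φ : Matrix X J ℂ) (u : X → EuclideanSpace ℂ I) (v : J → EuclideanSpace ℂ I) :
    ‖∑ i, ∑ j, Φ i j * (inner ℂ (u i) (v j) : ℂ)‖ ≤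
      specNorm Φ * (Real.sqrt (∑ i, ‖u i‖ ^ 2) * Real.sqrt (∑ j, ‖v j‖ ^ 2)) := by
  set U : I → EuclideanSpace ℂ X := fun k => WithLp.toLp 2 (fun i => u i k) with hU
  set V : I → EuclideanSpace ℂ J := fun k => WithLp.toLp 2 (fun j => v j k) with hV
  have happ : ∀ k i, (Matrix.toEuclideanLin Φ (V k)) i = ∑ j, Φ i j * v j k := by
    intro k i; rfl
  have hrhs : ∀ k, (inner ℂ (U k) (Matrix.toEuclideanLin Φ (V k)) : ℂ)
      = ∑ i, ∑ j, (starRingEnd ℂ) (u i k) * (Φ i j * v j k) := by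
    intro k
    simp only [PiLp.inner_apply, RCLike.inner_apply, happ, Finset.mul_sum]
    refine Finset.sum_congr rfl fun i _ => ?_
    rw [Finset.sum_mul]
    exact Finset.sum_congr rfl fun j _ => by rw [mul_comm]
  have h1 : ∑ i, ∑ j, Φ i j * (inner ℂ (u i) (v j) : ℂ)
      = ∑ k, (inner ℂ (U k) (Matrix.toEuclideanLin Φ (V k)) : ℂ) := by
    calc ∑ i, ∑ j, Φ i j * (inner ℂ (u i) (v j) : ℂ)
        = ∑ i, ∑ j, ∑ k, (starRingEnd ℂ) (u i k) * (Φ i j * v j k) := by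
          refine Finset.sum_congr rfl fun i _ => Finset.sum_congr rfl fun j _ => ?_
          simp only [PiLp.inner_apply, RCLike.inner_apply, Finset.mul_sum]
          exact Finset.sum_congr rfl fun k _ => by ring
      _ = ∑ i, ∑ k, ∑ j, (starRingEnd ℂ) (u i k) * (Φ i j * v j k) :=
          Finset.sum_congr rfl fun i _ => Finset.sum_comm
      _ = ∑ k, ∑ i, ∑ j, (starRingEnd ℂ) (u i k) * (Φ i j * v j k) := Finset.sum_comm
      _ = ∑ k, (inner ℂ (U k) (Matrix.toEuclideanLin Φ (V k)) : ℂ) :=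
          Finset.sum_congr rfl fun k _ => (hrhs k).symm
  rw [h1]
  have h2 : ∀ k, ‖(inner ℂ (U k) (Matrix.toEuclideanLin Φ (V k)) : ℂ)‖
      ≤ specNorm Φ * (‖U k‖ * ‖V k‖) := by
    intro k
    calc ‖(inner ℂ (U k) (Matrix.toEuclideanLin Φ (V k)) : ℂ)‖
        ≤ ‖U k‖ * ‖Matrix.toEuclideanLin Φ (V k)‖ := norm_inner_le_norm _ _
      _ ≤ ‖U k‖ * (specNorm Φ * ‖V k‖) :=
          mul_le_mul_of_nonneg_left (apply_le _ _) (norm_nonneg _)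
      _ = specNorm Φ * (‖U k‖ * ‖V k‖) := by ring
  have hUsum : ∑ k, ‖U k‖ ^ 2 = ∑ i, ‖u i‖ ^ 2 := by
    simp only [sq_norm]
    rw [Finset.sum_comm]
  have hVsum : ∑ k, ‖V k‖ ^ 2 = ∑ j, ‖v j‖ ^ 2 := by
    simp only [sq_norm]
    rw [Finset.sum_comm]
  have hcs : ∑ k, ‖U k‖ * ‖V k‖
      ≤ Real.sqrt (∑ i, ‖u i‖ ^ 2) * Real.sqrt (∑ j, ‖v j‖ ^ 2) := by
    rw [← hUsum, ← hVsum, ← Real.sqrt_mul (Finset.sum_nonneg fun k _ => by positivity)]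
    rw [Real.le_sqrt (Finset.sum_nonneg fun k _ => mul_nonneg (norm_nonneg _) (norm_nonneg _))]
    · exact Finset.sum_mul_sq_le_sq_mul_sq Finset.univ _ _
    · positivity
  calc ‖∑ k, (inner ℂ (U k) (Matrix.toEuclideanLin Φ (V k)) : ℂ)‖
      ≤ ∑ k, ‖(inner ℂ (U k) (Matrix.toEuclideanLin Φ (V k)) : ℂ)‖ := norm_sum_le _ _
    _ ≤ ∑ k, specNorm Φ * (‖U k‖ * ‖V k‖) := Finset.sum_le_sum fun k _ => h2 k
    _ = specNorm Φ * ∑ k, ‖U k‖ * ‖V k‖ := by rw [Finset.mul_sum]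
    _ ≤ specNorm Φ * (Real.sqrt (∑ i, ‖u i‖ ^ 2) * Real.sqrt (∑ j, ‖v j‖ ^ 2)) :=
        mul_le_mul_of_nonneg_left hcs (specNorm_nonneg _)

end Aux16

open Aux16 Matrix in
/-- Tripartite spectral-norm bound: for a unit vector `ψ`, local operators `A_x, B_y, C_z`
of operator norm at most `1`, and a matrix `Φ` indexed by `X × (Y × Z)`,
`|∑ Φ_{x,(y,z)} ⟨ψ, (A_x ⊗ B_y ⊗ C_z) ψ⟩| ≤ √(|X||Y||Z|)·‖Φ‖`. -/
theorem stmt16 {dA dB dC nX nY nZ : ℕ}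
    (ψ : EuclideanSpace ℂ ((Fin dA × Fin dB) × Fin dC)) (hψ : ‖ψ‖ = 1)
    (A : Fin nX → Matrix (Fin dA) (Fin dA) ℂ)
    (B : Fin nY → Matrix (Fin dB) (Fin dB) ℂ)
    (C : Fin nZ → Matrix (Fin dC) (Fin dC) ℂ)
    (hA : ∀ x, specNorm (A x) ≤ 1) (hB : ∀ y, specNorm (B y) ≤ 1)
    (hC : ∀ z, specNorm (C z) ≤ 1)
    (Φ : Matrix (Fin nX) (Fin nY × Fin nZ) ℂ) :
    ‖∑ x, ∑ y, ∑ z, Φ x (y, z) *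
        (inner ℂ ψ (Matrix.toEuclideanLin (((A x) ⊗ₖ (B y)) ⊗ₖ (C z)) ψ) : ℂ)‖ ≤
      Real.sqrt ((nX : ℝ) * nY * nZ) * specNorm Φ := by
  have hterm : ∀ x y z,
      (inner ℂ ψ (Matrix.toEuclideanLin (((A x) ⊗ₖ (B y)) ⊗ₖ (C z)) ψ) : ℂ)
        = (inner ℂ (Matrix.toEuclideanLin (((A x)ᴴ ⊗ₖ (1 : Matrix (Fin dB) (Fin dB) ℂ)) ⊗ₖ
            (1 : Matrix (Fin dC) (Fin dC) ℂ)) ψ)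
          (Matrix.toEuclideanLin (((1 : Matrix (Fin dA) (Fin dA) ℂ) ⊗ₖ B y) ⊗ₖ C z) ψ) : ℂ) := by
    intro x y z
    have hfac : (A x ⊗ₖ B y) ⊗ₖ C z
        = (((A x) ⊗ₖ (1 : Matrix (Fin dB) (Fin dB) ℂ)) ⊗ₖ (1 : Matrix (Fin dC) (Fin dC) ℂ)) *
          (((1 : Matrix (Fin dA) (Fin dA) ℂ) ⊗ₖ B y) ⊗ₖ C z) := by
      rw [← Matrix.mul_kronecker_mul, ← Matrix.mul_kronecker_mul, mul_one, one_mul, one_mul]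
    have hadj : Matrix.toEuclideanLin
        (((A x)ᴴ ⊗ₖ (1 : Matrix (Fin dB) (Fin dB) ℂ)) ⊗ₖ (1 : Matrix (Fin dC) (Fin dC) ℂ))
        = LinearMap.adjoint (Matrix.toEuclideanLin
          (((A x) ⊗ₖ (1 : Matrix (Fin dB) (Fin dB) ℂ)) ⊗ₖ (1 : Matrix (Fin dC) (Fin dC) ℂ))) := by
      rw [← Matrix.toEuclideanLin_conjTranspose_eq_adjoint, conjT_kron, conjT_kron,
        Matrix.conjTranspose_one, Matrix.conjTranspose_one]
    rw [hfac, toEuclideanLin_mul_apply, hadj, LinearMap.adjoint_inner_left]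
  set u : Fin nX → EuclideanSpace ℂ ((Fin dA × Fin dB) × Fin dC) := fun x =>
    Matrix.toEuclideanLin (((A x)ᴴ ⊗ₖ (1 : Matrix (Fin dB) (Fin dB) ℂ)) ⊗ₖ
      (1 : Matrix (Fin dC) (Fin dC) ℂ)) ψ with hu_def
  set v : (Fin nY × Fin nZ) → EuclideanSpace ℂ ((Fin dA × Fin dB) × Fin dC) := fun p =>
    Matrix.toEuclideanLin (((1 : Matrix (Fin dA) (Fin dA) ℂ) ⊗ₖ B p.1) ⊗ₖ C p.2) ψ with hv_def
  have hsum : ∑ x, ∑ y, ∑ z, Φ x (y, z) *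
      (inner ℂ ψ (Matrix.toEuclideanLin (((A x) ⊗ₖ (B y)) ⊗ₖ (C z)) ψ) : ℂ)
      = ∑ x, ∑ p : Fin nY × Fin nZ, Φ x p * (inner ℂ (u x) (v p) : ℂ) := by
    refine Finset.sum_congr rfl fun x _ => ?_
    rw [Fintype.sum_prod_type]
    exact Finset.sum_congr rfl fun y _ => Finset.sum_congr rfl fun z _ => by
      rw [hterm x y z]
  rw [hsum]
  have hu : ∀ x, ‖u x‖ ≤ 1 := by
    intro x
    have h1 : specNorm ((A x)ᴴ ⊗ₖ (1 : Matrix (Fin dB) (Fin dB) ℂ)) ≤ 1 := by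
      refine (specNorm_kron_le _ _).trans ?_
      rw [specNorm_conjT]
      nlinarith [hA x, specNorm_one_le (n := Fin dB), specNorm_nonneg (A x),
        specNorm_nonneg (1 : Matrix (Fin dB) (Fin dB) ℂ)]
    calc ‖u x‖ ≤ specNorm ((A x)ᴴ ⊗ₖ (1 : Matrix (Fin dB) (Fin dB) ℂ)) *
          (specNorm (1 : Matrix (Fin dC) (Fin dC) ℂ) * ‖ψ‖) := kron_le _ _ ψ
      _ ≤ 1 := by
          rw [hψ]
          nlinarith [specNorm_one_le (n := Fin dC), specNorm_nonneg
            ((A x)ᴴ ⊗ₖ (1 : Matrix (Fin dB) (Fin dB) ℂ)),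
            specNorm_nonneg (1 : Matrix (Fin dC) (Fin dC) ℂ), h1]
  have hv : ∀ p : Fin nY × Fin nZ, ‖v p‖ ≤ 1 := by
    intro p
    have h1 : specNorm ((1 : Matrix (Fin dA) (Fin dA) ℂ) ⊗ₖ B p.1) ≤ 1 := by
      refine (specNorm_kron_le _ _).trans ?_
      nlinarith [hB p.1, specNorm_one_le (n := Fin dA), specNorm_nonneg (B p.1),
        specNorm_nonneg (1 : Matrix (Fin dA) (Fin dA) ℂ)]
    calc ‖v p‖ ≤ specNorm ((1 : Matrix (Fin dA) (Fin dA) ℂ) ⊗ₖ B p.1) *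
          (specNorm (C p.2) * ‖ψ‖) := kron_le _ _ ψ
      _ ≤ 1 := by
          rw [hψ]
          nlinarith [hC p.2, specNorm_nonneg ((1 : Matrix (Fin dA) (Fin dA) ℂ) ⊗ₖ B p.1),
            specNorm_nonneg (C p.2), h1]
  have hSu : Real.sqrt (∑ x, ‖u x‖ ^ 2) ≤ Real.sqrt (nX : ℝ) := by
    refine Real.sqrt_le_sqrt ?_
    calc ∑ x, ‖u x‖ ^ 2 ≤ ∑ _x : Fin nX, (1 : ℝ) :=
          Finset.sum_le_sum fun x _ => by nlinarith [hu x, norm_nonneg (u x)]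
      _ = (nX : ℝ) := by simp
  have hSv : Real.sqrt (∑ p, ‖v p‖ ^ 2) ≤ Real.sqrt ((nY : ℝ) * nZ) := by
    refine Real.sqrt_le_sqrt ?_
    calc ∑ p, ‖v p‖ ^ 2 ≤ ∑ _p : Fin nY × Fin nZ, (1 : ℝ) :=
          Finset.sum_le_sum fun p _ => by nlinarith [hv p, norm_nonneg (v p)]
      _ = ((nY : ℝ) * nZ) := by simp [mul_comm]
  calc ‖∑ x, ∑ p : Fin nY × Fin nZ, Φ x p * (inner ℂ (u x) (v p) : ℂ)‖
      ≤ specNorm Φ * (Real.sqrt (∑ x, ‖u x‖ ^ 2) * Real.sqrt (∑ p, ‖v p‖ ^ 2)) := key Φ u v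
    _ ≤ specNorm Φ * (Real.sqrt (nX : ℝ) * Real.sqrt ((nY : ℝ) * nZ)) := by
        refine mul_le_mul_of_nonneg_left ?_ (specNorm_nonneg Φ)
        exact mul_le_mul hSu hSv (Real.sqrt_nonneg _) (Real.sqrt_nonneg _)
    _ = Real.sqrt ((nX : ℝ) * nY * nZ) * specNorm Φ := by
        rw [← Real.sqrt_mul (by positivity), ← mul_assoc, mul_comm]
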